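/- Fix a, b, c > 0 with a + b + c = 1. The function ζ(z) = z·ν(z) is strictly increasing on (0,∞), with lim_{z→0⁺} ζ(z) = 0 and lim_{z→∞} ζ(z) = ∞. Consequently, for every ψ ≥ 0 there is a unique z_ψ ≥ 0 with ζ(z_ψ) = ψ. -/

import Mathlib

open Real Filter

/-- The function `ζ(z)` from the arctic-curve parametrization (with `ζ(0) = 0`). -/
noncomputable def zeta (a b c z : ℝ) : ℝ :=
  Real.sqrt (z ^ 2 + z + 1) + Real.sqrt ((z * b + z * c + a + c) ^ 2 - 4 * a * b * z) / 2 +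
    ((b - c) * z - a - c) / 2 - 1

private lemma zeta_Qpos {a b c : ℝ} (ha : 0 < a) (hb : 0 < b) (hc : 0 < c) {z : ℝ}
    (hz : 0 ≤ z) : 0 < (z * b + z * c + a + c) ^ 2 - 4 * a * b * z := by
  rcases eq_or_lt_of_le hz with h | h
  · rw [← h]; nlinarith [mul_pos ha hc, sq_nonneg (a - c), mul_pos hc hc]
  · nlinarith [sq_nonneg ((b - c) * z - a - c),
      mul_pos (mul_pos hb hc) (mul_pos h (by linarith : (0:ℝ) < z + 1))]

private lemma zeta_hasDerivAt (a b c : ℝ) {x : ℝ}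
    (hQ : 0 < (x * b + x * c + a + c) ^ 2 - 4 * a * b * x) :
    HasDerivAt (zeta a b c)
      ((2 * x + 1) / (2 * Real.sqrt (x ^ 2 + x + 1)) +
        (2 * (x * b + x * c + a + c) ^ 1 * (b + c) - 4 * a * b) /
          (2 * Real.sqrt ((x * b + x * c + a + c) ^ 2 - 4 * a * b * x)) / 2 +
        (b - c) / 2) x := by
  have hP : (0:ℝ) < x ^ 2 + x + 1 := by nlinarith [sq_nonneg (2 * x + 1)]
  have h1 : HasDerivAt (fun z : ℝ => z ^ 2 + z + 1) (2 * x + 1) x := by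
    simpa using ((hasDerivAt_pow 2 x).add (hasDerivAt_id x)).add_const 1
  have hlin : HasDerivAt (fun z : ℝ => z * b + z * c + a + c) (b + c) x := by
    simpa using ((((hasDerivAt_id x).mul_const b).add
      ((hasDerivAt_id x).mul_const c)).add_const a).add_const c
  have h2 : HasDerivAt (fun z : ℝ => (z * b + z * c + a + c) ^ 2 - 4 * a * b * z)
      (2 * (x * b + x * c + a + c) ^ 1 * (b + c) - 4 * a * b) x := by
    have := (hlin.pow 2).sub ((hasDerivAt_id x).const_mul (4 * a * b))
    simpa [Pi.pow_def, Pi.sub_def] using this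
  have h3 : HasDerivAt (fun z : ℝ => ((b - c) * z - a - c) / 2) ((b - c) / 2) x := by
    simpa using ((((hasDerivAt_id x).const_mul (b - c)).sub_const a).sub_const c).div_const 2
  exact (((h1.sqrt hP.ne').add ((h2.sqrt hQ.ne').div_const 2)).add h3).sub_const 1

private lemma zeta_deriv_pos {a b c : ℝ} (ha : 0 < a) (hb : 0 < b) (hc : 0 < c)
    (habc : a + b + c = 1) {x : ℝ} (hx : 0 < x) :
    0 < (2 * x + 1) / (2 * Real.sqrt (x ^ 2 + x + 1)) +
        (2 * (x * b + x * c + a + c) ^ 1 * (b + c) - 4 * a * b) /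
          (2 * Real.sqrt ((x * b + x * c + a + c) ^ 2 - 4 * a * b * x)) / 2 +
        (b - c) / 2 := by
  have hQ : 0 < (x * b + x * c + a + c) ^ 2 - 4 * a * b * x := zeta_Qpos ha hb hc hx.le
  set s : ℝ := Real.sqrt ((x * b + x * c + a + c) ^ 2 - 4 * a * b * x) with hsdef
  have hs : 0 < s := Real.sqrt_pos.mpr hQ
  have hs2 : s ^ 2 = (x * b + x * c + a + c) ^ 2 - 4 * a * b * x := Real.sq_sqrt hQ.le
  have habsL : |(b - c) * x - a - c| ≤ s := by
    apply Real.abs_le_sqrt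
    nlinarith [mul_nonneg (mul_nonneg (mul_nonneg hb.le hc.le) hx.le)
      (by linarith : (0:ℝ) ≤ x + 1)]
  have hLle : (b - c) * x - a - c ≤ s := (abs_le.mp habsL).2
  have hLge : -s ≤ (b - c) * x - a - c := (abs_le.mp habsL).1
  -- first term is > 1/2
  have hP : (0:ℝ) < x ^ 2 + x + 1 := by positivity
  have ht : 0 < Real.sqrt (x ^ 2 + x + 1) := Real.sqrt_pos.mpr hP
  have htlt : Real.sqrt (x ^ 2 + x + 1) < 2 * x + 1 := by
    rw [show (2 * x + 1 : ℝ) = Real.sqrt ((2 * x + 1) ^ 2) from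
      (Real.sqrt_sq (by linarith)).symm]
    apply Real.sqrt_lt_sqrt hP.le
    nlinarith
  have h1 : (1:ℝ) / 2 < (2 * x + 1) / (2 * Real.sqrt (x ^ 2 + x + 1)) := by
    rw [div_lt_div_iff₀ (by norm_num) (by linarith)]
    linarith
  -- second + third term is > -1/2
  have hkey : 0 < (2 * (x * b + x * c + a + c) ^ 1 * (b + c) - 4 * a * b)
      + 2 * (1 + b - c) * s := by
    rcases le_or_gt 0 ((b - c) * x - a - c) with hL | hL
    · have hbc : 0 < b - c := by
        by_contra h
        push_neg at h
        nlinarith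
      nlinarith [mul_pos (mul_pos hb hc) (by linarith : (0:ℝ) < 2 * x + 1),
        mul_nonneg hbc.le hL, mul_nonneg (by linarith : (0:ℝ) ≤ 1 + b - c) hs.le]
    · have hm : (0:ℝ) ≤ 1 + b - c := by linarith
      nlinarith [mul_pos (mul_pos hb hc) (by linarith : (0:ℝ) < 2 * x + 1),
        mul_nonneg hm (by linarith : (0:ℝ) ≤ s + ((b - c) * x - a - c))]
  have heq : (2 * (x * b + x * c + a + c) ^ 1 * (b + c) - 4 * a * b) / (2 * s) / 2
      + (b - c) / 2 + 1 / 2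
      = (2 * (x * b + x * c + a + c) ^ 1 * (b + c) - 4 * a * b + 2 * (1 + b - c) * s)
        / (4 * s) := by
    field_simp
    ring
  have hpos := div_pos hkey (by linarith : (0:ℝ) < 4 * s)
  rw [← heq] at hpos
  linarith

/-- `ζ` is strictly increasing on `[0,∞)`, tends to `0` as `z → 0⁺` and to `∞` as `z → ∞`;
consequently for every `ψ ≥ 0` there is a unique `z ≥ 0` with `ζ(z) = ψ`. -/
theorem zeta_strictMono_surjective (a b c : ℝ) (ha : 0 < a) (hb : 0 < b) (hc : 0 < c)
    (habc : a + b + c = 1) :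
    StrictMonoOn (zeta a b c) (Set.Ici 0) ∧
    Tendsto (zeta a b c) (nhdsWithin 0 (Set.Ioi 0)) (nhds 0) ∧
    Tendsto (zeta a b c) atTop atTop ∧
    (∀ ψ : ℝ, 0 ≤ ψ → ∃! z : ℝ, 0 ≤ z ∧ zeta a b c z = ψ) := by
  have hcont : Continuous (zeta a b c) := by
    unfold zeta
    fun_prop
  have hmono : StrictMonoOn (zeta a b c) (Set.Ici 0) := by
    apply strictMonoOn_of_deriv_pos (convex_Ici 0) hcont.continuousOn
    intro x hx
    rw [interior_Ici] at hx
    have hx : (0:ℝ) < x := hx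
    have hd := zeta_hasDerivAt a b c (zeta_Qpos ha hb hc hx.le)
    rw [hd.deriv]
    exact zeta_deriv_pos ha hb hc habc hx
  have hzero : zeta a b c 0 = 0 := by
    unfold zeta
    rw [show (0 * b + 0 * c + a + c : ℝ) ^ 2 - 4 * a * b * 0 = (a + c) ^ 2 by ring,
      Real.sqrt_sq (by linarith)]
    norm_num
    ring
  have hlb : ∀ z : ℝ, 0 ≤ z → z - 1 ≤ zeta a b c z := by
    intro z hz
    unfold zeta
    have h1 : z ≤ Real.sqrt (z ^ 2 + z + 1) := by
      apply Real.le_sqrt_of_sq_le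
      nlinarith
    have h2 : -((b - c) * z - a - c) ≤ Real.sqrt ((z * b + z * c + a + c) ^ 2 - 4 * a * b * z) := by
      rcases le_or_gt (-((b - c) * z - a - c)) 0 with h | h
      · exact h.trans (Real.sqrt_nonneg _)
      · refine le_trans (le_abs_self _) ?_
        rw [abs_neg]
        apply Real.abs_le_sqrt
        nlinarith [mul_nonneg (mul_nonneg (mul_nonneg hb.le hc.le) hz)
          (by linarith : (0:ℝ) ≤ z + 1)]
    linarith
  have htop : Tendsto (zeta a b c) atTop atTop := by
    apply tendsto_atTop_mono' _ _ (tendsto_atTop_add_const_right atTop (-1) tendsto_id)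
    filter_upwards [eventually_ge_atTop (0:ℝ)] with z hz
    simpa [sub_eq_add_neg] using hlb z hz
  refine ⟨hmono, ?_, htop, ?_⟩
  · have h : Tendsto (zeta a b c) (nhdsWithin 0 (Set.Ioi 0)) (nhds (zeta a b c 0)) :=
      (hcont.tendsto 0).mono_left nhdsWithin_le_nhds
    rwa [hzero] at h
  · intro ψ hψ
    have hcontIcc : ContinuousOn (zeta a b c) (Set.Icc 0 (ψ + 1)) := hcont.continuousOn
    have hmem : ψ ∈ Set.Icc (zeta a b c 0) (zeta a b c (ψ + 1)) := by
      constructor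
      · rw [hzero]; exact hψ
      · have := hlb (ψ + 1) (by linarith)
        linarith
    obtain ⟨z, hzmem, hzeq⟩ := intermediate_value_Icc (by linarith : (0:ℝ) ≤ ψ + 1) hcontIcc hmem
    refine ⟨z, ⟨hzmem.1, hzeq⟩, ?_⟩
    intro y hy
    exact hmono.injOn hy.1 hzmem.1 (hy.2.trans hzeq.symm)
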